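/- Let k ≥ 1, J = [[0, I_k], [−I_k, 0]] ∈ M_{2k}(ℝ), and Sp_k = { A ∈ GL_{2k}(ℝ) : Aᵀ J A = J }. For every B in the normalizer N(Sp_k) of Sp_k in GL_{2k}(ℝ), there is a unique nonzero real number p(B) with Bᵀ J B = p(B)·J, and the resulting map p : N(Sp_k) → ℝˣ is a surjective group homomorphism whose kernel is exactly Sp_k. -/

import Mathlib

open Matrix

/-- The standard symplectic matrix `J = [[0, I], [-I, 0]]`. -/
def symplJ (k : ℕ) : Matrix (Fin k ⊕ Fin k) (Fin k ⊕ Fin k) ℝ :=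
  Matrix.fromBlocks 0 1 (-1) 0

/-- The symplectic group `Sp_k = { A ∈ GL_{2k}(ℝ) : Aᵀ J A = J }` as a subgroup
of `GL_{2k}(ℝ)`. -/
def SpGroup (k : ℕ) : Subgroup (GL (Fin k ⊕ Fin k) ℝ) where
  carrier := {A | (A : Matrix (Fin k ⊕ Fin k) (Fin k ⊕ Fin k) ℝ)ᵀ * symplJ k *
    (A : Matrix (Fin k ⊕ Fin k) (Fin k ⊕ Fin k) ℝ) = symplJ k}
  one_mem' := by simp
  mul_mem' := by
    intro a b ha hb
    simp only [Set.mem_setOf_eq] at *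
    set M := (a : Matrix (Fin k ⊕ Fin k) (Fin k ⊕ Fin k) ℝ)
    set N := (b : Matrix (Fin k ⊕ Fin k) (Fin k ⊕ Fin k) ℝ)
    have : ((a * b : GL (Fin k ⊕ Fin k) ℝ) : Matrix (Fin k ⊕ Fin k) (Fin k ⊕ Fin k) ℝ)
        = M * N := rfl
    rw [this, Matrix.transpose_mul]
    calc Nᵀ * Mᵀ * symplJ k * (M * N) = Nᵀ * (Mᵀ * symplJ k * M) * N := by noncomm_ring
      _ = Nᵀ * symplJ k * N := by rw [ha]
      _ = symplJ k := hb
  inv_mem' := by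
    intro a ha
    simp only [Set.mem_setOf_eq] at *
    set M := (a : Matrix (Fin k ⊕ Fin k) (Fin k ⊕ Fin k) ℝ)
    set N := ((a⁻¹ : GL (Fin k ⊕ Fin k) ℝ) : Matrix (Fin k ⊕ Fin k) (Fin k ⊕ Fin k) ℝ)
    have hMN : M * N = 1 := a.mul_inv
    have h1 : Nᵀ * (Mᵀ * symplJ k * M) * N = (M * N)ᵀ * symplJ k * (M * N) := by
      rw [Matrix.transpose_mul]; noncomm_ring
    rw [ha, hMN] at h1
    simpa using h1

namespace SpScratch

variable {k : ℕ}

abbrev Mat (k : ℕ) := Matrix (Fin k ⊕ Fin k) (Fin k ⊕ Fin k) ℝ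

lemma Jsq : symplJ k * symplJ k = -1 := by
  rw [symplJ, Matrix.fromBlocks_multiply, ← Matrix.fromBlocks_one (l := Fin k) (m := Fin k),
    Matrix.fromBlocks_neg]
  simp

lemma negJ_J : (-symplJ k) * symplJ k = 1 := by rw [neg_mul, Jsq]; simp

lemma J_negJ : symplJ k * (-symplJ k) = 1 := by rw [mul_neg, Jsq]; simp

lemma J_entry (i : Fin k) : symplJ k (Sum.inl i) (Sum.inr i) = 1 := by
  simp [symplJ, Matrix.fromBlocks]

lemma smulJ_entry (r : ℝ) (i : Fin k) : (r • symplJ k) (Sum.inl i) (Sum.inr i) = r := by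
  simp [J_entry]

lemma smulJ_inj (hk : 1 ≤ k) {r s : ℝ} (h : r • symplJ k = s • symplJ k) : r = s := by
  have := congrFun (congrFun h (Sum.inl ⟨0, hk⟩)) (Sum.inr ⟨0, hk⟩)
  rwa [smulJ_entry, smulJ_entry] at this

lemma J_cancel {X Y : Mat k} (h : symplJ k * X = symplJ k * Y) : X = Y := by
  calc X = ((-symplJ k) * symplJ k) * X := by rw [negJ_J, one_mul]
    _ = (-symplJ k) * (symplJ k * X) := by rw [mul_assoc]
    _ = (-symplJ k) * (symplJ k * Y) := by rw [h]
    _ = ((-symplJ k) * symplJ k) * Y := by rw [mul_assoc]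
    _ = Y := by rw [negJ_J, one_mul]

/-- Elementary upper-triangular symplectic unit. -/
def upU (E : Matrix (Fin k) (Fin k) ℝ) : GL (Fin k ⊕ Fin k) ℝ :=
  ⟨fromBlocks 1 E 0 1, fromBlocks 1 (-E) 0 1,
    by rw [Matrix.fromBlocks_multiply]; simp,
    by rw [Matrix.fromBlocks_multiply]; simp⟩

/-- Elementary lower-triangular symplectic unit. -/
def loU (E : Matrix (Fin k) (Fin k) ℝ) : GL (Fin k ⊕ Fin k) ℝ :=
  ⟨fromBlocks 1 0 E 1, fromBlocks 1 0 (-E) 1,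
    by rw [Matrix.fromBlocks_multiply]; simp,
    by rw [Matrix.fromBlocks_multiply]; simp⟩

lemma upU_symp (E : Matrix (Fin k) (Fin k) ℝ) (hE : Eᵀ = E) :
    ((upU E : GL (Fin k ⊕ Fin k) ℝ) : Mat k)ᵀ * symplJ k * ((upU E : GL (Fin k ⊕ Fin k) ℝ) : Mat k)
      = symplJ k := by
  show (fromBlocks 1 E 0 1)ᵀ * symplJ k * fromBlocks 1 E 0 1 = symplJ k
  rw [Matrix.fromBlocks_transpose, symplJ, Matrix.fromBlocks_multiply, Matrix.fromBlocks_multiply]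
  simp [hE]

lemma loU_symp (E : Matrix (Fin k) (Fin k) ℝ) (hE : Eᵀ = E) :
    ((loU E : GL (Fin k ⊕ Fin k) ℝ) : Mat k)ᵀ * symplJ k * ((loU E : GL (Fin k ⊕ Fin k) ℝ) : Mat k)
      = symplJ k := by
  show (fromBlocks 1 0 E 1)ᵀ * symplJ k * fromBlocks 1 0 E 1 = symplJ k
  rw [Matrix.fromBlocks_transpose, symplJ, Matrix.fromBlocks_multiply, Matrix.fromBlocks_multiply]
  simp [hE]

lemma transpose_sbm (i j : Fin k) :
    (single i j (1:ℝ))ᵀ = single j i 1 := by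
  ext a b
  simp [Matrix.single, and_comm]

/-- A matrix commuting with all symmetric matrices is scalar. -/
lemma scalar_of_commute_symm (P : Matrix (Fin k) (Fin k) ℝ)
    (h : ∀ E : Matrix (Fin k) (Fin k) ℝ, Eᵀ = E → P * E = E * P) :
    ∃ r : ℝ, P = r • 1 := by
  have key : ∀ i j : Fin k, i ≠ j → Commute (single i j (1:ℝ)) P := by
    intro i j hij
    have h1 : Commute (single i i (1:ℝ)) P := by
      have := h (single i i 1) (transpose_sbm i i)
      exact (Commute.symm this)
    have h2 : Commute (single i j (1:ℝ) + single j i 1) P := by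
      have := h (single i j 1 + single j i 1)
        (by rw [Matrix.transpose_add, transpose_sbm, transpose_sbm, add_comm])
      exact (Commute.symm this)
    have hprod : single i i (1:ℝ) * (single i j 1 + single j i 1)
        = single i j 1 := by
      rw [mul_add, Matrix.single_mul_single_same (c := 1) i i j 1,
        Matrix.single_mul_single_of_ne (c := 1) i i j hij 1]
      simp
    have := h1.mul_left h2
    rw [hprod] at this
    exact this
  obtain ⟨r, hr⟩ := Matrix.mem_range_scalar_of_commute_single
    (fun i j hij => key i j hij)
  refine ⟨r, ?_⟩
  rw [← hr]
  ext a b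
  simp [Matrix.scalar, Matrix.smul_apply, Matrix.one_apply, Matrix.diagonal_apply]

/-- A matrix commuting with the elementary symplectic matrices is scalar. -/
lemma scalar_of_commutes (C : Mat k)
    (hup : ∀ E : Matrix (Fin k) (Fin k) ℝ, Eᵀ = E →
      C * fromBlocks 1 E 0 1 = fromBlocks 1 E 0 1 * C)
    (hlo : ∀ E : Matrix (Fin k) (Fin k) ℝ, Eᵀ = E →
      C * fromBlocks 1 0 E 1 = fromBlocks 1 0 E 1 * C) :
    ∃ r : ℝ, C = r • 1 := by
  set P := C.toBlocks₁₁ with hP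
  set Q := C.toBlocks₁₂ with hQ
  set R := C.toBlocks₂₁ with hR
  set S := C.toBlocks₂₂ with hS
  have hC : C = fromBlocks P Q R S := (Matrix.fromBlocks_toBlocks C).symm
  have hup' : ∀ E : Matrix (Fin k) (Fin k) ℝ, Eᵀ = E →
      E * R = 0 ∧ P * E + Q = Q + E * S ∧ R * E = 0 := by
    intro E hE
    have := hup E hE
    rw [hC, Matrix.fromBlocks_multiply, Matrix.fromBlocks_multiply] at this
    simpa [Matrix.fromBlocks_inj] using this
  have hlo' : ∀ E : Matrix (Fin k) (Fin k) ℝ, Eᵀ = E →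
      Q * E = 0 ∧ R + S * E = E * P + R ∧ E * Q = 0 := by
    intro E hE
    have := hlo E hE
    rw [hC, Matrix.fromBlocks_multiply, Matrix.fromBlocks_multiply] at this
    simpa [Matrix.fromBlocks_inj] using this
  have hR0 : R = 0 := by
    have := (hup' 1 Matrix.transpose_one).1
    simpa using this
  have hQ0 : Q = 0 := by
    have := (hlo' 1 Matrix.transpose_one).1
    simpa using this
  have hPS : P = S := by
    have := (hup' 1 Matrix.transpose_one).2.1
    rw [mul_one, one_mul, add_comm Q S] at this
    exact add_right_cancel this
  have hcomm : ∀ E : Matrix (Fin k) (Fin k) ℝ, Eᵀ = E → P * E = E * P := by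
    intro E hE
    have := (hlo' E hE).2.1
    rw [hPS]
    have h2 : S * E = E * P := by
      have h3 := congrArg (fun X => X - R) this
      simpa [add_comm, add_sub_cancel_right] using h3
    rw [h2, hPS]
  obtain ⟨r, hr⟩ := scalar_of_commute_symm P hcomm
  refine ⟨r, ?_⟩
  rw [hC, hR0, hQ0, ← hPS, hr]
  rw [← Matrix.fromBlocks_one (l := Fin k) (m := Fin k), Matrix.fromBlocks_smul]
  simp



lemma mem_sp_iff (A : GL (Fin k ⊕ Fin k) ℝ) :
    A ∈ SpGroup k ↔ (A : Mat k)ᵀ * symplJ k * (A : Mat k) = symplJ k := Iff.rfl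

/-- If `BᵀJB = r•J` for a unit `r`, then conjugation by `B` maps `Sp` into `Sp`. -/
lemma conj_mem_of_scale (B : GL (Fin k ⊕ Fin k) ℝ) (r : ℝˣ)
    (h : (B : Mat k)ᵀ * symplJ k * (B : Mat k) = (r : ℝ) • symplJ k)
    (A : GL (Fin k ⊕ Fin k) ℝ) (hA : A ∈ SpGroup k) : B * A * B⁻¹ ∈ SpGroup k := by
  set J := symplJ k
  set Bm := (B : Mat k)
  set Bm' := ((B⁻¹ : GL (Fin k ⊕ Fin k) ℝ) : Mat k) with hBm'
  have hBB' : Bm * Bm' = 1 := B.mul_inv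
  have hB'B : Bm' * Bm = 1 := B.inv_mul
  have hAm : (A : Mat k)ᵀ * J * (A : Mat k) = J := hA
  -- B'ᵀ J B' = r⁻¹ • J
  have hinv : Bm'ᵀ * J * Bm' = (r⁻¹ : ℝ) • J := by
    have h1 : Bm'ᵀ * ((Bm)ᵀ * J * Bm) * Bm' = Bm'ᵀ * ((r : ℝ) • J) * Bm' := by rw [h]
    have h2 : Bm'ᵀ * (Bmᵀ * J * Bm) * Bm' = (Bm * Bm')ᵀ * J * (Bm * Bm') := by
      rw [Matrix.transpose_mul]; noncomm_ring
    rw [h2, hBB'] at h1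
    simp only [Matrix.transpose_one, one_mul, mul_one] at h1
    have h3 : Bm'ᵀ * ((r : ℝ) • J) * Bm' = (r : ℝ) • (Bm'ᵀ * J * Bm') := by
      rw [Matrix.mul_smul, Matrix.smul_mul]
    rw [h3] at h1
    have := congrArg (fun X => (r⁻¹ : ℝ) • X) h1
    have h4 : (r⁻¹ : ℝ) • J = Bm'ᵀ * J * Bm' := by
      simpa [smul_smul] using this
    exact h4.symm
  show ((B * A * B⁻¹ : GL (Fin k ⊕ Fin k) ℝ) : Mat k)ᵀ * J *
    ((B * A * B⁻¹ : GL (Fin k ⊕ Fin k) ℝ) : Mat k) = J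
  have hcoe : ((B * A * B⁻¹ : GL (Fin k ⊕ Fin k) ℝ) : Mat k) = Bm * (A : Mat k) * Bm' := rfl
  rw [hcoe]
  set Am := (A : Mat k)
  calc (Bm * Am * Bm')ᵀ * J * (Bm * Am * Bm')
      = Bm'ᵀ * (Amᵀ * (Bmᵀ * J * Bm) * Am) * Bm' := by
        rw [Matrix.transpose_mul, Matrix.transpose_mul]; noncomm_ring
    _ = Bm'ᵀ * (Amᵀ * ((r : ℝ) • J) * Am) * Bm' := by rw [h]
    _ = Bm'ᵀ * ((r : ℝ) • (Amᵀ * J * Am)) * Bm' := by rw [Matrix.mul_smul, Matrix.smul_mul]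
    _ = Bm'ᵀ * ((r : ℝ) • J) * Bm' := by rw [hAm]
    _ = (r : ℝ) • (Bm'ᵀ * J * Bm') := by rw [Matrix.mul_smul, Matrix.smul_mul]
    _ = (r : ℝ) • ((r⁻¹ : ℝ) • J) := by rw [hinv]
    _ = J := by rw [smul_smul]; simp

lemma mem_normalizer_of_scale (B : GL (Fin k ⊕ Fin k) ℝ) (r : ℝˣ)
    (h : (B : Mat k)ᵀ * symplJ k * (B : Mat k) = (r : ℝ) • symplJ k) :
    B ∈ (Subgroup.normalizer (SpGroup k : Set (GL (Fin k ⊕ Fin k) ℝ))) := by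
  rw [Subgroup.mem_normalizer_iff]
  intro A
  constructor
  · exact conj_mem_of_scale B r h A
  · intro hA
    -- conjugation by B⁻¹ also scales: B⁻¹ᵀ J B⁻¹ = r⁻¹ • J (derived inside conj_mem_of_scale)
    have hinv : ((B⁻¹ : GL (Fin k ⊕ Fin k) ℝ) : Mat k)ᵀ * symplJ k *
        ((B⁻¹ : GL (Fin k ⊕ Fin k) ℝ) : Mat k) = (r⁻¹ : ℝ) • symplJ k := by
      set Bm := (B : Mat k)
      set Bm' := ((B⁻¹ : GL (Fin k ⊕ Fin k) ℝ) : Mat k)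
      have hBB' : Bm * Bm' = 1 := B.mul_inv
      have h1 : Bm'ᵀ * (Bmᵀ * symplJ k * Bm) * Bm' = Bm'ᵀ * ((r : ℝ) • symplJ k) * Bm' := by rw [h]
      have h2 : Bm'ᵀ * (Bmᵀ * symplJ k * Bm) * Bm' = (Bm * Bm')ᵀ * symplJ k * (Bm * Bm') := by
        rw [Matrix.transpose_mul]; noncomm_ring
      rw [h2, hBB'] at h1
      simp only [Matrix.transpose_one, one_mul, mul_one] at h1
      rw [Matrix.mul_smul, Matrix.smul_mul] at h1
      have := congrArg (fun X => (r⁻¹ : ℝ) • X) h1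
      have h4 : (r⁻¹ : ℝ) • symplJ k = Bm'ᵀ * symplJ k * Bm' := by
        simpa [smul_smul] using this
      exact h4.symm
    have := conj_mem_of_scale B⁻¹ r⁻¹ (by simpa using hinv) (B * A * B⁻¹) hA
    have heq : B⁻¹ * (B * A * B⁻¹) * (B⁻¹)⁻¹ = A := by group
    rwa [heq] at this

/-- Main: every element of the normalizer scales J. -/
lemma exists_scale (hk : 1 ≤ k) (B : GL (Fin k ⊕ Fin k) ℝ)
    (hB : B ∈ (Subgroup.normalizer (SpGroup k : Set (GL (Fin k ⊕ Fin k) ℝ)))) :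
    ∃ r : ℝˣ, (B : Mat k)ᵀ * symplJ k * (B : Mat k) = (r : ℝ) • symplJ k := by
  set J := symplJ k with hJdef
  set Bm := (B : Mat k)
  set Bm' := ((B⁻¹ : GL (Fin k ⊕ Fin k) ℝ) : Mat k)
  have hBB' : Bm * Bm' = 1 := B.mul_inv
  have hB'B : Bm' * Bm = 1 := B.inv_mul
  set J' := Bmᵀ * J * Bm with hJ'def
  have hJnegJ : J * (-J) = 1 := J_negJ
  have hcan : ∀ {X Y : Mat k}, J * X = J * Y → X = Y := fun h => J_cancel h
  -- every symplectic A preserves J'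
  have hpres : ∀ A : GL (Fin k ⊕ Fin k) ℝ, A ∈ SpGroup k →
      (A : Mat k)ᵀ * J' * (A : Mat k) = J' := by
    intro A hA
    have hBA : B * A * B⁻¹ ∈ SpGroup k := (Subgroup.mem_normalizer_iff.mp hB A).mp hA
    have hX : (Bm * (A : Mat k) * Bm')ᵀ * J * (Bm * (A : Mat k) * Bm') = J := hBA
    set Am := (A : Mat k)
    have hXB : Bm * Am = (Bm * Am * Bm') * Bm := by
      rw [mul_assoc (Bm * Am), hB'B, mul_one]
    calc Amᵀ * J' * Am = (Bm * Am)ᵀ * J * (Bm * Am) := by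
          rw [hJ'def, Matrix.transpose_mul]; noncomm_ring
      _ = ((Bm * Am * Bm') * Bm)ᵀ * J * ((Bm * Am * Bm') * Bm) := by rw [← hXB]
      _ = Bmᵀ * ((Bm * Am * Bm')ᵀ * J * (Bm * Am * Bm')) * Bm := by
          rw [Matrix.transpose_mul]; noncomm_ring
      _ = Bmᵀ * J * Bm := by rw [hX]
      _ = J' := hJ'def.symm
  -- hence C := (-J) * J' commutes with all symplectic matrices
  have hcomm : ∀ A : GL (Fin k ⊕ Fin k) ℝ, A ∈ SpGroup k →
      ((-J) * J') * (A : Mat k) = (A : Mat k) * ((-J) * J') := by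
    intro A hA
    set Am := (A : Mat k) with hAm
    set Am' := ((A⁻¹ : GL (Fin k ⊕ Fin k) ℝ) : Mat k) with hAm'
    have hAA' : Am * Am' = 1 := A.mul_inv
    have hJA : Amᵀ * J * Am = J := hA
    have hJ'A := hpres A hA
    have h1 : J * Am = Am'ᵀ * J := by
      calc J * Am = (Am * Am')ᵀ * (J * Am) := by rw [hAA']; simp
        _ = Am'ᵀ * (Amᵀ * J * Am) := by rw [Matrix.transpose_mul]; noncomm_ring
        _ = Am'ᵀ * J := by rw [hJA]
    have h2 : J' * Am = Am'ᵀ * J' := by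
      calc J' * Am = (Am * Am')ᵀ * (J' * Am) := by rw [hAA']; simp
        _ = Am'ᵀ * (Amᵀ * J' * Am) := by rw [Matrix.transpose_mul]; noncomm_ring
        _ = Am'ᵀ * J' := by rw [hJ'A]
    apply hcan
    calc J * ((-J) * J' * Am) = (J * (-J)) * (J' * Am) := by noncomm_ring
      _ = J' * Am := by rw [hJnegJ, one_mul]
      _ = Am'ᵀ * J' := h2
      _ = Am'ᵀ * (J * ((-J) * J')) := by rw [← mul_assoc J (-J) J', hJnegJ, one_mul]
      _ = (Am'ᵀ * J) * ((-J) * J') := by rw [mul_assoc]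
      _ = (J * Am) * ((-J) * J') := by rw [h1]
      _ = J * (Am * ((-J) * J')) := by rw [mul_assoc]
  obtain ⟨r, hr⟩ := scalar_of_commutes ((-J) * J')
    (fun E hE => hcomm (upU E) (upU_symp E hE))
    (fun E hE => hcomm (loU E) (loU_symp E hE))
  have hJ' : J' = r • J := by
    have h3 : J * ((-J) * J') = J' := by rw [← mul_assoc J (-J) J', hJnegJ, one_mul]
    rw [hr, Matrix.mul_smul, mul_one] at h3
    exact h3.symm
  have hrne : r ≠ 0 := by
    intro h0
    have hJ0 : J' = 0 := by rw [hJ', h0, zero_smul]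
    have hback : Bm'ᵀ * J' * Bm' = J := by
      calc Bm'ᵀ * (Bmᵀ * J * Bm) * Bm' = (Bm * Bm')ᵀ * J * (Bm * Bm') := by
            rw [Matrix.transpose_mul]; noncomm_ring
        _ = J := by rw [hBB']; simp
    rw [hJ0, mul_zero, zero_mul] at hback
    have h5 := congrFun (congrFun hback (Sum.inl ⟨0, hk⟩)) (Sum.inr ⟨0, hk⟩)
    rw [hJdef, J_entry] at h5
    simp at h5
  exact ⟨Units.mk0 r hrne, hJ'⟩

/-- Diagonal scaling unit realizing `p = r`. -/
def diagU (r : ℝˣ) : GL (Fin k ⊕ Fin k) ℝ :=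
  ⟨fromBlocks ((r : ℝ) • 1) 0 0 1, fromBlocks (((r⁻¹ : ℝˣ) : ℝ) • 1) 0 0 1,
    by rw [Matrix.fromBlocks_multiply]
       simp [Matrix.smul_mul, Matrix.mul_smul, smul_smul, ← Matrix.fromBlocks_one]
       , by rw [Matrix.fromBlocks_multiply]
            simp [Matrix.smul_mul, Matrix.mul_smul, smul_smul, ← Matrix.fromBlocks_one]⟩

lemma diagU_scale (r : ℝˣ) :
    ((diagU r : GL (Fin k ⊕ Fin k) ℝ) : Mat k)ᵀ * symplJ k *
      ((diagU r : GL (Fin k ⊕ Fin k) ℝ) : Mat k) = (r : ℝ) • symplJ k := by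
  show (fromBlocks ((r : ℝ) • 1) 0 0 1)ᵀ * symplJ k * fromBlocks ((r : ℝ) • 1) 0 0 1
      = (r : ℝ) • symplJ k
  rw [Matrix.fromBlocks_transpose, symplJ, Matrix.fromBlocks_multiply, Matrix.fromBlocks_multiply,
    Matrix.fromBlocks_smul]
  simp [Matrix.smul_mul, Matrix.mul_smul]

end SpScratch


/-- Exactness part of the paper's Lemma 5.2 (lem:N(Sp)): each `B ∈ N(Sp_k)`
satisfies `Bᵀ J B = p(B)·J` for a unique nonzero real `p(B)`, and the resulting
map `p : N(Sp_k) → ℝˣ` is a surjective group homomorphism with kernel `Sp_k`. -/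
theorem sp_normalizer_exact_sequence (k : ℕ) (hk : 1 ≤ k) :
    (∀ B : (Subgroup.normalizer (SpGroup k : Set (GL (Fin k ⊕ Fin k) ℝ))),
      ∃! r : ℝˣ,
        ((B : GL (Fin k ⊕ Fin k) ℝ) : Matrix (Fin k ⊕ Fin k) (Fin k ⊕ Fin k) ℝ)ᵀ * symplJ k *
          ((B : GL (Fin k ⊕ Fin k) ℝ) : Matrix (Fin k ⊕ Fin k) (Fin k ⊕ Fin k) ℝ)
            = (r : ℝ) • symplJ k) ∧
    ∃ p : (Subgroup.normalizer (SpGroup k : Set (GL (Fin k ⊕ Fin k) ℝ))) →* ℝˣ,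
      (∀ B : (Subgroup.normalizer (SpGroup k : Set (GL (Fin k ⊕ Fin k) ℝ))),
        ((B : GL (Fin k ⊕ Fin k) ℝ) : Matrix (Fin k ⊕ Fin k) (Fin k ⊕ Fin k) ℝ)ᵀ * symplJ k *
          ((B : GL (Fin k ⊕ Fin k) ℝ) : Matrix (Fin k ⊕ Fin k) (Fin k ⊕ Fin k) ℝ)
            = (p B : ℝ) • symplJ k) ∧
      Function.Surjective p ∧
      ∀ B : (Subgroup.normalizer (SpGroup k : Set (GL (Fin k ⊕ Fin k) ℝ))), p B = 1 ↔ (B : GL (Fin k ⊕ Fin k) ℝ) ∈ SpGroup k := by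
  have key : ∀ B : (Subgroup.normalizer (SpGroup k : Set (GL (Fin k ⊕ Fin k) ℝ))),
      ∃ r : ℝˣ,
        ((B : GL (Fin k ⊕ Fin k) ℝ) : SpScratch.Mat k)ᵀ * symplJ k *
          ((B : GL (Fin k ⊕ Fin k) ℝ) : SpScratch.Mat k) = (r : ℝ) • symplJ k :=
    fun B => SpScratch.exists_scale hk (B : GL (Fin k ⊕ Fin k) ℝ) B.2
  choose f hf using key
  have uniq : ∀ (B : (Subgroup.normalizer (SpGroup k : Set (GL (Fin k ⊕ Fin k) ℝ)))) (s : ℝˣ),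
      ((B : GL (Fin k ⊕ Fin k) ℝ) : SpScratch.Mat k)ᵀ * symplJ k *
        ((B : GL (Fin k ⊕ Fin k) ℝ) : SpScratch.Mat k) = (s : ℝ) • symplJ k → s = f B := by
    intro B s hs
    exact Units.ext (SpScratch.smulJ_inj hk (hs.symm.trans (hf B)))
  have hmul : ∀ B₁ B₂ : (Subgroup.normalizer (SpGroup k : Set (GL (Fin k ⊕ Fin k) ℝ))), f (B₁ * B₂) = f B₁ * f B₂ := by
    intro B₁ B₂
    refine (uniq (B₁ * B₂) (f B₁ * f B₂) ?_).symm
    have hcoe : (((B₁ * B₂ : (Subgroup.normalizer (SpGroup k : Set (GL (Fin k ⊕ Fin k) ℝ)))) : GL (Fin k ⊕ Fin k) ℝ) : SpScratch.Mat k)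
        = ((B₁ : GL (Fin k ⊕ Fin k) ℝ) : SpScratch.Mat k) *
          ((B₂ : GL (Fin k ⊕ Fin k) ℝ) : SpScratch.Mat k) := rfl
    set M₁ := ((B₁ : GL (Fin k ⊕ Fin k) ℝ) : SpScratch.Mat k)
    set M₂ := ((B₂ : GL (Fin k ⊕ Fin k) ℝ) : SpScratch.Mat k)
    rw [hcoe, Matrix.transpose_mul]
    calc M₂ᵀ * M₁ᵀ * symplJ k * (M₁ * M₂)
        = M₂ᵀ * (M₁ᵀ * symplJ k * M₁) * M₂ := by noncomm_ring
      _ = M₂ᵀ * (((f B₁ : ℝ)) • symplJ k) * M₂ := by rw [hf B₁]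
      _ = (f B₁ : ℝ) • (M₂ᵀ * symplJ k * M₂) := by rw [Matrix.mul_smul, Matrix.smul_mul]
      _ = (f B₁ : ℝ) • ((f B₂ : ℝ) • symplJ k) := by rw [hf B₂]
      _ = ((f B₁ * f B₂ : ℝˣ) : ℝ) • symplJ k := by rw [smul_smul, Units.val_mul]
  constructor
  · exact fun B => ⟨f B, hf B, fun s hs => uniq B s hs⟩
  · refine ⟨MonoidHom.mk' f hmul, hf, ?_, ?_⟩
    · intro r
      have hD := SpScratch.diagU_scale (k := k) r
      have hmem := SpScratch.mem_normalizer_of_scale (SpScratch.diagU r) r hD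
      exact ⟨⟨SpScratch.diagU r, hmem⟩, (uniq ⟨SpScratch.diagU r, hmem⟩ r hD).symm⟩
    · intro B
      constructor
      · intro h1
        have := hf B
        rw [show f B = (1 : ℝˣ) from h1] at this
        exact (SpScratch.mem_sp_iff _).mpr (by simpa using this)
      · intro hmem
        have : ((B : GL (Fin k ⊕ Fin k) ℝ) : SpScratch.Mat k)ᵀ * symplJ k *
            ((B : GL (Fin k ⊕ Fin k) ℝ) : SpScratch.Mat k) = ((1 : ℝˣ) : ℝ) • symplJ k := by
          simpa using (SpScratch.mem_sp_iff _).mp hmem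
        exact (uniq B 1 this).symm
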